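/- Let n ≥ 1, let x_1,…,x_n ∈ {0,1} be fixed, and let D_1,…,D_n be independent and identically distributed Bernoulli(q) random variables with q ∈ (0,1]. Then E[(Σ_{i=1}^n D_i·x_i)/(Σ_{i=1}^n D_i) | Σ_{i=1}^n D_i > 0] = (Σ_{i=1}^n x_i)/n. -/

import Mathlib

/-- symmetry: the weighted count `∑_{T ∋ i} w(|T|)/|T|` does not depend on `i`. -/
lemma stmt2_aux_sym {n : ℕ} (w : ℕ → ℝ) (i j : Fin n) :
    (∑ T : Finset (Fin n), if i ∈ T then w T.card / T.card else 0)
      = ∑ T : Finset (Fin n), if j ∈ T then w T.card / T.card else 0 := by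
  classical
  refine Fintype.sum_equiv (Equiv.finsetCongr (Equiv.swap i j)) _ _ (fun T => ?_)
  have hcard : (T.map (Equiv.swap i j).toEmbedding).card = T.card := Finset.card_map _
  have hmem : j ∈ T.map (Equiv.swap i j).toEmbedding ↔ i ∈ T := by
    rw [Finset.mem_map_equiv]
    simp [Equiv.swap_apply_right]
  simp only [Equiv.finsetCongr_apply, hcard, hmem]

lemma stmt2_aux_key (n : ℕ) (hn : 0 < n) (x : Fin n → ℝ) (w : ℕ → ℝ) :
    ∑ T : Finset (Fin n), w T.card * ((∑ i ∈ T, x i) / T.card)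
      = (∑ i, x i) / n *
          ∑ T ∈ Finset.univ.filter (fun T : Finset (Fin n) => T ≠ ∅), w T.card := by
  classical
  let c : Fin n → ℝ :=
    fun i => ∑ T : Finset (Fin n), if i ∈ T then w T.card / T.card else 0
  have hc : ∀ i, c i = ∑ T : Finset (Fin n), if i ∈ T then w T.card / T.card else 0 :=
    fun i => rfl
  -- LHS = ∑ i, x i * c i
  have h1 : ∑ T : Finset (Fin n), w T.card * ((∑ i ∈ T, x i) / T.card)
      = ∑ i, x i * c i := by
    have : ∀ T : Finset (Fin n), w T.card * ((∑ i ∈ T, x i) / T.card)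
        = ∑ i, (if i ∈ T then w T.card / T.card else 0) * x i := by
      intro T
      simp only [ite_mul, zero_mul, Finset.sum_ite_mem, Finset.univ_inter, ← Finset.mul_sum]
      ring
    rw [Finset.sum_congr rfl fun T _ => this T, Finset.sum_comm]
    refine Finset.sum_congr rfl fun i _ => ?_
    rw [hc i, mul_comm, Finset.sum_mul]
  -- all c i equal, and their sum is the weight total
  have h2 : ∀ i, (n : ℝ) * c i
      = ∑ T ∈ Finset.univ.filter (fun T : Finset (Fin n) => T ≠ ∅), w T.card := by
    intro i
    have hall : ∀ j, c j = c i := fun j => stmt2_aux_sym w j i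
    have : (n : ℝ) * c i = ∑ j : Fin n, c j := by
      rw [Finset.sum_congr rfl fun j _ => hall j, Finset.sum_const, Finset.card_univ,
        Fintype.card_fin, nsmul_eq_mul]
    rw [this, Finset.sum_congr rfl fun j (_ : j ∈ Finset.univ) => hc j, Finset.sum_comm,
      Finset.sum_filter]
    refine Finset.sum_congr rfl fun T _ => ?_
    rw [Finset.sum_ite_mem, Finset.univ_inter, Finset.sum_const, nsmul_eq_mul]
    by_cases hT : T = ∅
    · simp [hT]
    · have hcard : (T.card : ℝ) ≠ 0 := by
        exact_mod_cast Finset.card_ne_zero.mpr (Finset.nonempty_iff_ne_empty.mpr hT)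
      rw [if_pos hT, mul_div_cancel₀ _ hcard]
  have hn' : (n : ℝ) ≠ 0 := by positivity
  have h3 : ∀ i, c i = (∑ T ∈ Finset.univ.filter
      (fun T : Finset (Fin n) => T ≠ ∅), w T.card) / n := by
    intro i
    rw [eq_div_iff hn', mul_comm]
    exact h2 i
  rw [h1, Finset.sum_congr rfl fun i _ => by rw [h3 i]]
  rw [← Finset.sum_mul]
  ring



open MeasureTheory ProbabilityTheory

/-- conditional unbiasedness of the test-positive rate under simple random
testing: with fixed infection statuses `x i ∈ {0,1}` and i.i.d. Bernoulli(q) testing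
indicators, `E[(Σ Dᵢxᵢ)/(Σ Dᵢ) | Σ Dᵢ > 0] = (Σ xᵢ)/n`. -/
theorem stmt2
    {Ω : Type*} [MeasurableSpace Ω] (μ : Measure Ω) [IsProbabilityMeasure μ]
    (n : ℕ) (hn : 0 < n)
    (x : Fin n → ℝ) (hx : ∀ i, x i = 0 ∨ x i = 1)
    (q : ℝ) (hq : q ∈ Set.Ioc (0 : ℝ) 1)
    (D : Fin n → Ω → ℝ)
    (hDmeas : ∀ i, Measurable (D i))
    (hD01 : ∀ i ω, D i ω = 0 ∨ D i ω = 1)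
    (hindep : iIndepFun D μ)
    (hq1 : ∀ i, μ {ω | D i ω = 1} = ENNReal.ofReal q) :
    (∫ ω, (∑ i, D i ω * x i) / (∑ i, D i ω)
        ∂(μ[|{ω | 0 < ∑ i, D i ω}]))
      = (∑ i, x i) / n := by
  classical
  have hq0 : 0 < q := hq.1
  have hq1' : q ≤ 1 := hq.2
  set E : Set Ω := {ω | 0 < ∑ i, D i ω} with hEdef
  set f : Ω → ℝ := fun ω => (∑ i, D i ω * x i) / (∑ i, D i ω) with hfdef
  -- the random support
  set Tw : Ω → Finset (Fin n) := fun ω => Finset.univ.filter (fun i => D i ω = 1) with hTw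
  set A : Finset (Fin n) → Set Ω := fun T => {ω | Tw ω = T} with hA
  have hTval : ∀ ω i, D i ω = if i ∈ Tw ω then 1 else 0 := by
    intro ω i
    by_cases h : D i ω = 1
    · rw [if_pos]; · exact h
      simp [hTw, h]
    · rw [if_neg]
      · exact (hD01 i ω).resolve_right h
      simp [hTw, h]
  -- A T as intersection of preimages
  have hA_eq : ∀ T, A T = ⋂ i, D i ⁻¹' {(if i ∈ T then (1:ℝ) else 0)} := by
    intro T
    ext ω
    simp only [hA, Set.mem_setOf_eq, Set.mem_iInter, Set.mem_preimage, Set.mem_singleton_iff]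
    constructor
    · rintro rfl
      exact fun i => hTval ω i
    · intro h
      ext i
      simp only [hTw, Finset.mem_filter, Finset.mem_univ, true_and]
      constructor
      · intro h1
        by_contra hiT
        rw [h i, if_neg hiT] at h1
        norm_num at h1
      · intro hiT
        rw [h i, if_pos hiT]
  have hA_meas : ∀ T, MeasurableSet (A T) := by
    intro T
    rw [hA_eq]
    exact MeasurableSet.iInter fun i => (hDmeas i) (measurableSet_singleton _)
  -- probabilities of the atoms
  have hD1 : ∀ i, μ (D i ⁻¹' {(1:ℝ)}) = ENNReal.ofReal q := by
    intro i
    have : D i ⁻¹' {(1:ℝ)} = {ω | D i ω = 1} := rfl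
    rw [this, hq1]
  have hD0 : ∀ i, μ (D i ⁻¹' {(0:ℝ)}) = ENNReal.ofReal (1 - q) := by
    intro i
    have hcompl : D i ⁻¹' {(0:ℝ)} = (D i ⁻¹' {(1:ℝ)})ᶜ := by
      ext ω
      simp only [Set.mem_preimage, Set.mem_singleton_iff, Set.mem_compl_iff]
      rcases hD01 i ω with h | h <;> simp [h]
    rw [hcompl, measure_compl ((hDmeas i) (measurableSet_singleton _)) (measure_ne_top μ _),
      measure_univ, hD1, ← ENNReal.ofReal_one, ← ENNReal.ofReal_sub _ hq0.le]
  have hA_prob : ∀ T : Finset (Fin n),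
      μ (A T) = ENNReal.ofReal (q ^ T.card * (1 - q) ^ (n - T.card)) := by
    intro T
    rw [hA_eq]
    rw [hindep.meas_iInter (fun i => ⟨{(if i ∈ T then (1:ℝ) else 0)},
      measurableSet_singleton _, rfl⟩)]
    have : ∀ i, μ (D i ⁻¹' {(if i ∈ T then (1:ℝ) else 0)})
        = if i ∈ T then ENNReal.ofReal q else ENNReal.ofReal (1 - q) := by
      intro i
      by_cases h : i ∈ T <;> simp [h, hD1 i, hD0 i]
    rw [Finset.prod_congr rfl fun i _ => this i]
    rw [Finset.prod_ite, Finset.prod_const, Finset.prod_const]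
    rw [ENNReal.ofReal_mul (by positivity), ENNReal.ofReal_pow hq0.le,
      ENNReal.ofReal_pow (by linarith)]
    congr 2
    · simp [Finset.filter_mem_eq_inter]
    · have : Finset.univ.filter (fun i => i ∉ T) = Tᶜ := by
        ext i; simp
      rw [this, Finset.card_compl, Fintype.card_fin]
  -- pointwise identities
  have hS_eq : ∀ ω, (∑ i, D i ω) = ((Tw ω).card : ℝ) := by
    intro ω
    rw [Finset.sum_congr rfl fun i _ => hTval ω i]
    simp [Finset.sum_ite_mem]
  have hnum : ∀ ω, (∑ i, D i ω * x i) = ∑ i ∈ Tw ω, x i := by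
    intro ω
    rw [Finset.sum_congr rfl fun i _ => by rw [hTval ω i]]
    simp [ite_mul, Finset.sum_ite_mem]
  have hfval : ∀ ω, f ω = (∑ i ∈ Tw ω, x i) / ((Tw ω).card : ℝ) := by
    intro ω
    rw [hfdef]
    simp only
    rw [hnum ω, hS_eq ω]
  have hE_mem : ∀ ω, ω ∈ E ↔ Tw ω ≠ ∅ := by
    intro ω
    rw [hEdef]
    simp only [Set.mem_setOf_eq, hS_eq ω, Nat.cast_pos, Finset.card_pos,
      Finset.nonempty_iff_ne_empty]
  have hfzero : ∀ ω ∉ E, f ω = 0 := by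
    intro ω hω
    rw [hE_mem, not_not] at hω
    rw [hfval ω, hω]
    simp
  -- decompose the integrand as a sum of indicators
  have hf_sum : ∀ ω, f ω = ∑ T : Finset (Fin n),
      Set.indicator (A T) (fun _ => (∑ i ∈ T, x i) / (T.card : ℝ)) ω := by
    intro ω
    rw [Finset.sum_eq_single (Tw ω)]
    · rw [Set.indicator_of_mem (show ω ∈ A (Tw ω) from rfl)]
      exact hfval ω
    · intro T _ hne
      have hnot : ω ∉ A T := fun h => hne ((h : Tw ω = T).symm)
      exact Set.indicator_of_notMem hnot _
    · intro h
      exact absurd (Finset.mem_univ _) h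
  have hint : ∫ ω, f ω ∂μ = ∑ T : Finset (Fin n),
      ((∑ i ∈ T, x i) / (T.card : ℝ)) * (μ (A T)).toReal := by
    calc ∫ ω, f ω ∂μ
        = ∫ ω, (∑ T : Finset (Fin n),
            Set.indicator (A T) (fun _ => (∑ i ∈ T, x i) / (T.card : ℝ)) ω) ∂μ := by
          congr 1; funext ω; exact hf_sum ω
      _ = ∑ T : Finset (Fin n), ∫ ω,
            Set.indicator (A T) (fun _ => (∑ i ∈ T, x i) / (T.card : ℝ)) ω ∂μ :=
          integral_finset_sum _ (fun T _ => (integrable_const _).indicator (hA_meas T))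
      _ = _ := by
          refine Finset.sum_congr rfl fun T _ => ?_
          rw [integral_indicator_const _ (hA_meas T), smul_eq_mul, mul_comm, measureReal_def]
  -- measure of E
  have hE_eq : E = ⋃ T ∈ Finset.univ.filter (fun T : Finset (Fin n) => T ≠ ∅), A T := by
    ext ω
    simp only [Set.mem_iUnion, Finset.mem_filter, Finset.mem_univ, true_and, hE_mem ω]
    constructor
    · intro h
      exact ⟨Tw ω, h, rfl⟩
    · rintro ⟨T, hTne, (rfl : Tw ω = T)⟩
      exact hTne
  have hμE : μ E = ∑ T ∈ Finset.univ.filter (fun T : Finset (Fin n) => T ≠ ∅), μ (A T) := by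
    rw [hE_eq]
    refine measure_biUnion_finset ?_ (fun T _ => hA_meas T)
    intro T _ T' _ hne
    refine Set.disjoint_left.mpr fun ω hT hT' => hne ?_
    exact (hT : Tw ω = T).symm.trans (hT' : Tw ω = T')
  have hμE_ne0 : μ E ≠ 0 := by
    have hsub : A Finset.univ ⊆ E := by
      intro ω (h : Tw ω = Finset.univ)
      rw [hE_mem ω, h]
      have : Nonempty (Fin n) := ⟨⟨0, hn⟩⟩
      exact Finset.univ_nonempty.ne_empty
    have : 0 < μ (A Finset.univ) := by
      rw [hA_prob]
      refine ENNReal.ofReal_pos.mpr ?_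
      have : (Finset.univ : Finset (Fin n)).card = n := by
        rw [Finset.card_univ, Fintype.card_fin]
      rw [this, Nat.sub_self, pow_zero, mul_one]
      positivity
    exact fun h0 => (this.trans_le (measure_mono hsub)).ne' (by rw [h0])
  have hWne : (μ E).toReal ≠ 0 :=
    ENNReal.toReal_ne_zero.mpr ⟨hμE_ne0, measure_ne_top μ E⟩
  -- weights
  have hw_toReal : ∀ T : Finset (Fin n),
      (μ (A T)).toReal = q ^ T.card * (1 - q) ^ (n - T.card) := by
    intro T
    rw [hA_prob, ENNReal.toReal_ofReal
      (mul_nonneg (pow_nonneg hq0.le _) (pow_nonneg (by linarith) _))]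
  have hWsum : (μ E).toReal = ∑ T ∈ Finset.univ.filter (fun T : Finset (Fin n) => T ≠ ∅),
      q ^ T.card * (1 - q) ^ (n - T.card) := by
    rw [hμE, ENNReal.toReal_sum (fun T _ => measure_ne_top μ _)]
    exact Finset.sum_congr rfl fun T _ => hw_toReal T
  -- reduce the conditional integral
  have hcond : (μ[|E]) = (μ E)⁻¹ • μ.restrict E := rfl
  have hrestrict : ∫ ω, f ω ∂(μ.restrict E) = ∫ ω, f ω ∂μ :=
    setIntegral_eq_integral_of_forall_compl_eq_zero hfzero
  calc ∫ ω, f ω ∂(μ[|E])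
      = (μ E).toReal⁻¹ * ∫ ω, f ω ∂(μ.restrict E) := by
        rw [hcond, integral_smul_measure, ENNReal.toReal_inv, smul_eq_mul]
    _ = (μ E).toReal⁻¹ * ((∑ i, x i) / n * (μ E).toReal) := by
        rw [hrestrict, hint]
        congr 1
        rw [hWsum, ← stmt2_aux_key n hn x (fun k => q ^ k * (1 - q) ^ (n - k))]
        exact Finset.sum_congr rfl fun T _ => by rw [hw_toReal T, mul_comm]
    _ = (∑ i, x i) / n := by
        field_simp
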